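/- Let X be a locally kω Hausdorff space and Y ⊆ X a σ-compact subset. Then Y has an open neighbourhood U in X which is a kω-space in the subspace topology. -/

import Mathlib

open Set Topology

/-- `K` is a kω-sequence for the topological space `X`: an ascending sequence of
compact subsets covering `X` such that the topology of `X` is final with respect
to the inclusions `K n → X`. -/
def IsKOmegaSeq {X : Type*} [TopologicalSpace X] (K : ℕ → Set X) : Prop :=
  (∀ n, IsCompact (K n)) ∧ Monotone K ∧ (⋃ n, K n) = Set.univ ∧
    ∀ U : Set X, IsOpen U ↔ ∀ n, IsOpen ((Subtype.val ⁻¹' U) : Set (K n))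

/-- A kω-space: a Hausdorff space which is the direct limit of an ascending
sequence of compact subsets. -/
def IsKOmega (X : Type*) [TopologicalSpace X] : Prop :=
  T2Space X ∧ ∃ K : ℕ → Set X, IsKOmegaSeq K

/-- A locally kω space: a Hausdorff space each point of which has an open
neighbourhood which is a kω-space in the induced topology. -/
def IsLocallyKOmega (X : Type*) [TopologicalSpace X] : Prop :=
  T2Space X ∧ ∀ x : X, ∃ U : Set X, IsOpen U ∧ x ∈ U ∧ IsKOmega U

section aux
variable {X : Type*} [TopologicalSpace X]

lemma preim_eq_preim_iff {A : Type*} (f : A → X) (u w : Set X) :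
    f ⁻¹' u = f ⁻¹' w ↔ u ∩ Set.range f = w ∩ Set.range f := by
  constructor
  · intro h
    ext y
    constructor
    · rintro ⟨hy, a, rfl⟩
      refine ⟨?_, a, rfl⟩
      rw [← Set.mem_preimage, h] at hy; exact hy
    · rintro ⟨hy, a, rfl⟩
      refine ⟨?_, a, rfl⟩
      rw [← Set.mem_preimage, ← h] at hy; exact hy
  · intro h
    ext a
    simp only [Set.mem_preimage]
    have h1 : f a ∈ Set.range f := ⟨a, rfl⟩
    constructor
    · intro ha
      exact (h ▸ (Set.mem_inter ha h1)).1
    · intro ha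
      exact (h.symm ▸ (Set.mem_inter ha h1)).1

lemma isOpen_preimage_iff_of_range_eq {A B : Type*} [TopologicalSpace A] [TopologicalSpace B]
    {f : A → X} {g : B → X} (hf : IsInducing f) (hg : IsInducing g)
    (h : Set.range f = Set.range g) (W : Set X) :
    IsOpen (f ⁻¹' W) ↔ IsOpen (g ⁻¹' W) := by
  rw [hf.isOpen_iff, hg.isOpen_iff]
  constructor
  · rintro ⟨u, hu, hu2⟩
    refine ⟨u, hu, ?_⟩
    rw [preim_eq_preim_iff] at hu2 ⊢
    rwa [← h]
  · rintro ⟨u, hu, hu2⟩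
    refine ⟨u, hu, ?_⟩
    rw [preim_eq_preim_iff] at hu2 ⊢
    rwa [h]

lemma trace_open_iff {V : Set X} (S : Set V) (W : Set X) :
    IsOpen (Subtype.val ⁻¹' (Subtype.val ⁻¹' W : Set V) : Set S) ↔
    IsOpen (Subtype.val ⁻¹' W : Set (Subtype.val '' S : Set X)) := by
  have e1 : IsInducing (fun x : S => ((x : V) : X)) :=
    IsInducing.subtypeVal.comp IsInducing.subtypeVal
  have hr : Set.range (fun x : S => ((x : V) : X)) =
      Set.range (Subtype.val : (Subtype.val '' S : Set X) → X) := by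
    rw [Subtype.range_val,
      show (fun x : S => ((x : V) : X)) = (Subtype.val : V → X) ∘ (Subtype.val : S → V) from rfl,
      Set.range_comp, Subtype.range_val]
  exact isOpen_preimage_iff_of_range_eq e1 IsInducing.subtypeVal hr W

lemma isOpen_trace_mono {A B : Set X} (h : A ⊆ B) {W : Set X}
    (hW : IsOpen (Subtype.val ⁻¹' W : Set B)) : IsOpen (Subtype.val ⁻¹' W : Set A) :=
  hW.preimage (continuous_inclusion h)

lemma isOpen_of_trace {V : Set X} (hV : IsOpen V) {W : Set X} (hWV : W ⊆ V)
    (h : IsOpen (Subtype.val ⁻¹' W : Set V)) : IsOpen W := by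
  have := hV.isOpenMap_subtype_val _ h
  rwa [Subtype.image_preimage_coe, Set.inter_eq_self_of_subset_right hWV] at this

end aux

section main
variable {X : Type*} [TopologicalSpace X]

lemma kOmega_iUnion [T2Space X] (g : ℕ → Set X)
    (hopen : ∀ i, IsOpen (g i)) (hk : ∀ i, IsKOmega (g i)) :
    IsKOmega (↥(⋃ i, g i)) := by
  classical
  set U : Set X := ⋃ i, g i with hU
  choose K' hK' using fun i => (hk i).2
  set K : ℕ → ℕ → Set X := fun i n => Subtype.val '' K' i n with hKdef
  have hKg : ∀ i n, K i n ⊆ g i := by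
    intro i n
    rintro x ⟨y, -, rfl⟩; exact y.2
  have hKcompact : ∀ i n, IsCompact (K i n) :=
    fun i n => ((hK' i).1 n).image continuous_subtype_val
  have hKmono : ∀ i, Monotone (K i) :=
    fun i a b hab => Set.image_mono ((hK' i).2.1 hab)
  have hKcover : ∀ i, (⋃ n, K i n) = g i := by
    intro i
    rw [← Set.image_iUnion (f := (Subtype.val : g i → X)), (hK' i).2.2.1,
      Set.image_univ, Subtype.range_val]
  -- the key openness criterion for each g i
  have key : ∀ i (W : Set X), W ⊆ g i →
      (∀ n, IsOpen (Subtype.val ⁻¹' W : Set (K i n))) → IsOpen W := by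
    intro i W hsub h
    refine isOpen_of_trace (hopen i) hsub ?_
    rw [(hK' i).2.2.2]
    intro n
    rw [trace_open_iff]
    exact h n
  -- the ascending sequence
  set L : ℕ → Set X := fun n => ⋃ i ≤ n, K i n with hLdef
  have hLU : ∀ n, L n ⊆ U := by
    intro n
    refine Set.iUnion₂_subset fun i _ => (hKg i n).trans ?_
    exact Set.subset_iUnion g i
  have hLmono : Monotone L := by
    intro a b hab x hx
    simp only [hLdef, Set.mem_iUnion] at hx ⊢
    obtain ⟨i, hia, hxi⟩ := hx
    exact ⟨i, hia.trans hab, hKmono i hab hxi⟩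
  have hKL : ∀ i n, K i n ⊆ L (max i n) := fun i n x hx =>
    Set.mem_iUnion₂.mpr ⟨i, le_max_left i n, hKmono i (le_max_right i n) hx⟩
  have hLcover : (⋃ n, L n) = U := by
    apply Set.Subset.antisymm (Set.iUnion_subset hLU)
    refine Set.iUnion_subset fun i x hx => ?_
    have : (⟨x, hx⟩ : g i) ∈ (⋃ n, K' i n) := by rw [(hK' i).2.2.1]; trivial
    obtain ⟨n, hn⟩ := Set.mem_iUnion.mp this
    exact Set.mem_iUnion.mpr ⟨max i n, hKL i n ⟨⟨x, hx⟩, hn, rfl⟩⟩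
  have hLcompact : ∀ n, IsCompact (L n) := by
    intro n
    exact (Set.finite_Iic n).isCompact_biUnion fun i _ => hKcompact i n
  -- assemble the kω-sequence on U
  refine ⟨inferInstance, fun n => Subtype.val ⁻¹' L n, ?_, ?_, ?_, ?_⟩
  · intro n
    rw [Subtype.isCompact_iff, Subtype.image_preimage_coe,
      Set.inter_eq_self_of_subset_right (hLU n)]
    exact hLcompact n
  · exact fun a b hab => Set.preimage_mono (hLmono hab)
  · rw [← Set.preimage_iUnion, hLcover]
    ext x; simpa using x.2
  · intro U'
    constructor
    · intro h n
      exact h.preimage continuous_subtype_val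
    · intro h
      set W : Set X := Subtype.val '' U' with hWdef
      have hWU : W ⊆ U := by rintro x ⟨y, -, rfl⟩; exact y.2
      have hU'W : Subtype.val ⁻¹' W = U' := Set.preimage_image_eq U' Subtype.val_injective
      have hWopen : IsOpen W := by
        have hWeq : W = ⋃ i, W ∩ g i := by
          rw [← Set.inter_iUnion, Set.inter_eq_self_of_subset_left hWU]
        rw [hWeq]
        refine isOpen_iUnion fun i => ?_
        refine key i (W ∩ g i) Set.inter_subset_right fun n => ?_
        have h1 : (Subtype.val ⁻¹' (W ∩ g i) : Set (K i n)) = Subtype.val ⁻¹' W := by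
          ext x
          simp only [Set.mem_preimage, Set.mem_inter_iff, and_iff_left_iff_imp]
          exact fun _ => hKg i n x.2
        rw [h1]
        have h2 := h (max i n)
        have h3 : (Subtype.val ⁻¹' U' : Set (Subtype.val ⁻¹' L (max i n) : Set U)) =
            Subtype.val ⁻¹' (Subtype.val ⁻¹' W : Set U) := by rw [hU'W]
        rw [h3, trace_open_iff] at h2
        have h4 : (Subtype.val '' (Subtype.val ⁻¹' L (max i n) : Set U)) = L (max i n) := by
          rw [Subtype.image_preimage_coe, Set.inter_eq_self_of_subset_right (hLU _)]
        rw [h4] at h2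
        exact isOpen_trace_mono (hKL i n) h2
      rw [← hU'W]
      exact hWopen.preimage continuous_subtype_val
end main

lemma isKOmega_empty {X : Type*} [TopologicalSpace X] : IsKOmega (↥(∅ : Set X)) := by
  haveI : IsEmpty (↥(∅ : Set X)) := ⟨fun x => x.2⟩
  refine ⟨⟨fun a => a.2.elim⟩, fun _ => ∅, fun _ => isCompact_empty, monotone_const, ?_, ?_⟩
  · rw [Set.iUnion_const]
    exact (Set.univ_eq_empty_iff.mpr inferInstance).symm
  · intro U
    have hU : U = ∅ := Set.eq_empty_of_isEmpty U
    subst hU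
    simp only [Set.preimage_empty]
    exact ⟨fun _ _ => isOpen_empty, fun _ => isOpen_empty⟩


/-- In a locally kω space, every σ-compact subset has an open neighbourhood
which is a kω-space in the subspace topology. -/
theorem exists_kOmega_open_nhd_of_sigmaCompact_subset
    {X : Type*} [TopologicalSpace X] (hX : IsLocallyKOmega X)
    {Y : Set X} (C : ℕ → Set X) (hC : ∀ n, IsCompact (C n)) (hYC : Y = ⋃ n, C n) :
    ∃ U : Set X, IsOpen U ∧ Y ⊆ U ∧ IsKOmega U := by
  obtain ⟨hT2, hloc⟩ := hX
  haveI := hT2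
  choose V hVopen hVmem hVk using hloc
  have hcov : ∀ n, ∃ t : Finset X, C n ⊆ ⋃ x ∈ t, V x := fun n =>
    (hC n).elim_finite_subcover V hVopen fun x _ => Set.mem_iUnion.mpr ⟨x, hVmem x⟩
  choose t ht using hcov
  set T : Set X := ⋃ n, (t n : Set X) with hT
  have hTc : T.Countable := Set.countable_iUnion fun n => (t n).countable_toSet
  rcases Set.eq_empty_or_nonempty T with hTe | hTne
  · refine ⟨∅, isOpen_empty, ?_, isKOmega_empty⟩
    intro y hy
    rw [hYC] at hy
    obtain ⟨n, hn⟩ := Set.mem_iUnion.mp hy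
    obtain ⟨x, hxt, -⟩ := Set.mem_iUnion₂.mp (ht n hn)
    have hxT : x ∈ T := Set.mem_iUnion.mpr ⟨n, hxt⟩
    rw [hTe] at hxT
    exact hxT.elim
  · obtain ⟨f, hf⟩ := Set.Countable.exists_eq_range hTc hTne
    refine ⟨⋃ n, V (f n), isOpen_iUnion fun n => hVopen (f n), ?_,
      kOmega_iUnion (fun n => V (f n)) (fun n => hVopen (f n)) (fun n => hVk (f n))⟩
    intro y hy
    rw [hYC] at hy
    obtain ⟨n, hn⟩ := Set.mem_iUnion.mp hy
    obtain ⟨x, hxt, hyx⟩ := Set.mem_iUnion₂.mp (ht n hn)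
    have hxT : x ∈ T := Set.mem_iUnion.mpr ⟨n, hxt⟩
    rw [hf] at hxT
    obtain ⟨m, rfl⟩ := hxT
    exact Set.mem_iUnion.mpr ⟨m, hyx⟩
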